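/- Let a, b be real numbers with a > 0, b < 0, 4a + b > 3|b|, and a + b > 0. Define f : [-1,1] → ℝ by f(x) = (a + b x^2)(4a + b(1 - x^2)) + a b (1 - x^2) + (b^2/4)(1 - x^2)^2. Then f(x) ≥ min((4a+b)^2/4, 4a(a+b)) > 0 for all x in [-1,1]. -/
import Mathlib


/-- positive lower bound for the auxiliary polynomial on `[-1, 1]`. -/
theorem stmt2 (a b : ℝ) (ha : 0 < a) (hb : b < 0) (hab4 : 3 * |b| < 4 * a + b)
    (hab : 0 < a + b) (f : ℝ → ℝ)
    (hf : ∀ x : ℝ, f x =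
      (a + b * x ^ 2) * (4 * a + b * (1 - x ^ 2)) + a * b * (1 - x ^ 2)
        + (b ^ 2 / 4) * (1 - x ^ 2) ^ 2) :
    (∀ x ∈ Set.Icc (-1 : ℝ) 1,
        min ((4 * a + b) ^ 2 / 4) (4 * a * (a + b)) ≤ f x) ∧
      0 < min ((4 * a + b) ^ 2 / 4) (4 * a * (a + b)) := by
  rw [abs_of_neg hb] at hab4
  constructor
  · intro x hx
    obtain ⟨hx1, hx2⟩ := hx
    have ht0 : 0 ≤ 1 - x ^ 2 := by nlinarith
    have ht1 : 1 - x ^ 2 ≤ 1 := by nlinarith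
    rw [hf x]
    rcases min_le_iff.mpr (Or.inl (le_refl ((4 * a + b) ^ 2 / 4))) with h1
    have h2 := min_le_right ((4 * a + b) ^ 2 / 4) (4 * a * (a + b))
    rcases le_total ((4 * a + b) ^ 2 / 4) (4 * a * (a + b)) with h | h
    · rw [min_eq_left h]
      nlinarith [mul_nonneg ht0 (sub_nonneg.mpr ht1), sq_nonneg b, mul_nonneg ht0 ht0]
    · rw [min_eq_right h]
      nlinarith [mul_nonneg ht0 (sub_nonneg.mpr ht1), sq_nonneg b, mul_nonneg ht0 ht0]
  · have h4ab : 0 < 4 * a + b := by linarith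
    apply lt_min
    · nlinarith
    · nlinarith
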